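/- Let E = EuclideanSpace ℝ (Fin d), J : E → ℝ differentiable with L̂-Lipschitz gradient (L̂ ≥ 0), λ > L̂, and V(w) = sup_{θ ∈ E} [J(θ) − (λ/2)‖θ − w‖²]. If θ̃ ∈ E is a ν-approximate stationary point of the inner problem at w, i.e. ‖∇J(θ̃) − λ(θ̃ − w)‖ ≤ ν for some ν ≥ 0, then the approximate envelope gradient λ(θ̃ − w) satisfies ‖λ(θ̃ − w) − ∇V(w)‖ ≤ λν/(λ − L̂). -/

import Mathlib

open Metric Set Filter Asymptotics InnerProductSpace
open scoped RealInnerProductSpace Topology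

namespace MoreauAux

variable {d : ℕ} {J : EuclideanSpace ℝ (Fin d) → ℝ} {Lhat lam : ℝ}

/-- Descent lemma. -/
lemma descent (hJ : Differentiable ℝ J)
    (hLhat : 0 ≤ Lhat)
    (hLip : ∀ x y, ‖gradient J x - gradient J y‖ ≤ Lhat * ‖x - y‖)
    (x y : EuclideanSpace ℝ (Fin d)) :
    J y ≤ J x + ⟪gradient J x, y - x⟫_ℝ + Lhat / 2 * ‖y - x‖ ^ 2 := by
  set v := y - x with hv
  have hline : ∀ t : ℝ, HasDerivAt (fun t : ℝ => J (x + t • v))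
      ⟪gradient J (x + t • v), v⟫_ℝ t := by
    intro t
    have h1 : HasDerivAt (fun t : ℝ => x + t • v) v t := by
      simpa using ((hasDerivAt_id t).smul_const v).const_add x
    have h2 := (hJ (x + t • v)).hasGradientAt.hasFDerivAt
    have h3 := h2.comp_hasDerivAt t h1
    simpa [InnerProductSpace.toDual_apply_apply, Function.comp_def] using h3
  set c : ℝ := ⟪gradient J x, v⟫_ℝ with hc
  set ψ : ℝ → ℝ := fun t => J (x + t • v) - t * c - Lhat / 2 * ‖v‖ ^ 2 * t ^ 2 with hψ
  have hψ' : ∀ t : ℝ, HasDerivAt ψ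
      (⟪gradient J (x + t • v), v⟫_ℝ - c - Lhat / 2 * ‖v‖ ^ 2 * (2 * t)) t := by
    intro t
    have h4 := ((hline t).sub ((hasDerivAt_id t).mul_const c)).sub
      ((hasDerivAt_pow 2 t).const_mul (Lhat / 2 * ‖v‖ ^ 2))
    rw [hψ]
    refine h4.congr_deriv (Eq.symm ?_)
    push_cast
    ring
  have hdiff : Differentiable ℝ ψ := fun t => (hψ' t).differentiableAt
  have hanti : AntitoneOn ψ (Icc (0:ℝ) 1) := by
    apply antitoneOn_of_deriv_nonpos (convex_Icc 0 1)
    · exact hdiff.continuous.continuousOn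
    · intro t ht
      exact (hdiff t).differentiableWithinAt
    · intro t ht
      rw [interior_Icc] at ht
      rw [(hψ' t).deriv]
      have h1 : ⟪gradient J (x + t • v) - gradient J x, v⟫_ℝ ≤ Lhat * t * ‖v‖ ^ 2 := by
        refine (real_inner_le_norm _ _).trans ?_
        have h2 := hLip (x + t • v) x
        have h3 : ‖x + t • v - x‖ = t * ‖v‖ := by
          simp [norm_smul, abs_of_nonneg ht.1.le]
        rw [h3] at h2
        nlinarith [norm_nonneg v, norm_nonneg (gradient J (x + t • v) - gradient J x)]
      rw [inner_sub_left] at h1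
      nlinarith [ht.1]
  have h01 := hanti (left_mem_Icc.2 zero_le_one) (right_mem_Icc.2 zero_le_one) zero_le_one
  have e0 : ψ 0 = J x := by simp [hψ]
  have e1 : ψ 1 = J y - c - Lhat / 2 * ‖v‖ ^ 2 := by simp [hψ, hv]
  rw [e0, e1] at h01
  linarith

/-- Strong monotonicity of `θ ↦ lam • θ - ∇J θ`. -/
lemma strongmono (hLip : ∀ x y, ‖gradient J x - gradient J y‖ ≤ Lhat * ‖x - y‖)
    (hlam : Lhat < lam) (θ₁ θ₂ : EuclideanSpace ℝ (Fin d)) :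
    (lam - Lhat) * ‖θ₁ - θ₂‖ ≤ ‖lam • (θ₁ - θ₂) - (gradient J θ₁ - gradient J θ₂)‖ := by
  rcases eq_or_ne θ₁ θ₂ with h | h
  · simp [h]
  have hd : 0 < ‖θ₁ - θ₂‖ := by simpa [sub_ne_zero] using norm_pos_iff.2 (sub_ne_zero.2 h)
  have key : (lam - Lhat) * ‖θ₁ - θ₂‖ ^ 2 ≤
      ⟪lam • (θ₁ - θ₂) - (gradient J θ₁ - gradient J θ₂), θ₁ - θ₂⟫_ℝ := by
    rw [inner_sub_left, real_inner_smul_left, real_inner_self_eq_norm_sq]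
    have h1 : ⟪gradient J θ₁ - gradient J θ₂, θ₁ - θ₂⟫_ℝ ≤ Lhat * ‖θ₁ - θ₂‖ * ‖θ₁ - θ₂‖ := by
      refine (real_inner_le_norm _ _).trans ?_
      have := hLip θ₁ θ₂
      nlinarith [norm_nonneg (θ₁ - θ₂)]
    nlinarith
  have h2 := real_inner_le_norm (lam • (θ₁ - θ₂) - (gradient J θ₁ - gradient J θ₂)) (θ₁ - θ₂)
  nlinarith

/-- gradient of the quadratic. -/
lemma hasGradientAt_normsq (w θ : EuclideanSpace ℝ (Fin d)) :
    HasGradientAt (fun θ' => ‖θ' - w‖ ^ 2) ((2:ℝ) • (θ - w)) θ := by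
  rw [hasGradientAt_iff_isLittleO]
  have key : ∀ θ' : EuclideanSpace ℝ (Fin d),
      ‖θ' - w‖ ^ 2 - ‖θ - w‖ ^ 2 - ⟪(2:ℝ) • (θ - w), θ' - θ⟫_ℝ = ‖θ' - θ‖ ^ 2 := by
    intro θ'
    have h1 : θ' - w = (θ - w) + (θ' - θ) := by abel
    rw [h1, norm_add_sq_real, real_inner_smul_left]
    ring
  simp only [key]
  rw [isLittleO_iff]
  intro c hc
  filter_upwards [Metric.ball_mem_nhds θ hc] with θ' hθ'
  rw [mem_ball, dist_eq_norm] at hθ'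
  have : ‖θ' - θ‖ ^ 2 ≤ c * ‖θ' - θ‖ := by nlinarith [norm_nonneg (θ' - θ)]
  simpa [abs_of_nonneg (sq_nonneg ‖θ' - θ‖), Real.norm_eq_abs] using this

lemma hasGradientAt_obj (hJ : Differentiable ℝ J) (w θ : EuclideanSpace ℝ (Fin d)) :
    HasGradientAt (fun θ' => J θ' - lam / 2 * ‖θ' - w‖ ^ 2)
      (gradient J θ - lam • (θ - w)) θ := by
  rw [hasGradientAt_iff_hasFDerivAt]
  have h1 := (hJ θ).hasGradientAt.hasFDerivAt
  have h2 := (hasGradientAt_normsq w θ).hasFDerivAt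
  have h3 := h1.sub (h2.const_mul (lam / 2))
  refine h3.congr_fderiv (Eq.symm ?_)
  rw [map_sub, map_smul]
  ext u
  simp [inner_smul_left, real_inner_smul_left]
  ring

lemma aux_scalar (B Lh lm Jw gθ r : ℝ)
    (hr2 : 2 * B + 2 ≤ (lm - Lh) * r) (hrn : 0 < r)
    (hthis : gθ ≤ Jw + B * r - (lm - Lh) / 2 * (r * r)) : gθ < Jw := by
  nlinarith [mul_le_mul_of_nonneg_right hr2 hrn.le]

/-- Existence of a global maximizer of the inner problem. -/
lemma exists_max (hJ : Differentiable ℝ J) (hLhat : 0 ≤ Lhat)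
    (hLip : ∀ x y, ‖gradient J x - gradient J y‖ ≤ Lhat * ‖x - y‖)
    (hlam : Lhat < lam) (w : EuclideanSpace ℝ (Fin d)) :
    ∃ θhat : EuclideanSpace ℝ (Fin d), ∀ θ,
      J θ - lam / 2 * ‖θ - w‖ ^ 2 ≤ J θhat - lam / 2 * ‖θhat - w‖ ^ 2 := by
  set g : EuclideanSpace ℝ (Fin d) → ℝ := fun θ => J θ - lam / 2 * ‖θ - w‖ ^ 2 with hg
  have hcg : Continuous g := by
    apply hJ.continuous.sub
    exact (continuous_const.mul (((continuous_id.sub continuous_const).norm).pow 2))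
  set B : ℝ := ‖gradient J w‖ with hB
  set R : ℝ := (2 * B + 2) / (lam - Lhat) with hR
  have hlamL : 0 < lam - Lhat := by linarith
  have hRpos : 0 < R := by positivity
  have hub : ∀ θ : EuclideanSpace ℝ (Fin d), R ≤ ‖θ - w‖ → g θ < g w := by
    intro θ hθ
    have hdes := descent hJ hLhat hLip w θ
    have hin : ⟪gradient J w, θ - w⟫_ℝ ≤ B * ‖θ - w‖ := real_inner_le_norm _ _
    have hgw : g w = J w := by simp [hg]
    have hr : (2 * B + 2) ≤ (lam - Lhat) * ‖θ - w‖ := by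
      rw [hR, div_le_iff₀ hlamL] at hθ
      linarith [hθ]
    have hrn : 0 < ‖θ - w‖ := lt_of_lt_of_le hRpos hθ
    have : g θ ≤ J w + B * ‖θ - w‖ - (lam - Lhat) / 2 * ‖θ - w‖ ^ 2 := by
      simp only [hg]
      nlinarith
    rw [hgw]
    rw [pow_two] at this
    exact aux_scalar B Lhat lam (J w) (g θ) ‖θ - w‖ hr hrn this
  obtain ⟨θ₀, hθ₀mem, hθ₀max⟩ :=
    (isCompact_closedBall w R).exists_isMaxOn ⟨w, by simp [hRpos.le]⟩ hcg.continuousOn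
  refine ⟨θ₀, fun θ => ?_⟩
  show g θ ≤ g θ₀
  rcases le_or_gt ‖θ - w‖ R with h | h
  · exact hθ₀max (by simpa [Metric.mem_closedBall, dist_eq_norm] using h)
  · have h1 := hub θ h.le
    have h2 : g w ≤ g θ₀ := hθ₀max (by simp [Metric.mem_closedBall, hRpos.le])
    linarith

/-- First-order condition at the maximizer. -/
lemma grad_at_max (hJ : Differentiable ℝ J) {w θhat : EuclideanSpace ℝ (Fin d)}
    (hmax : ∀ θ, J θ - lam / 2 * ‖θ - w‖ ^ 2 ≤ J θhat - lam / 2 * ‖θhat - w‖ ^ 2) :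
    gradient J θhat = lam • (θhat - w) := by
  have hloc : IsLocalMax (fun θ' => J θ' - lam / 2 * ‖θ' - w‖ ^ 2) θhat :=
    Filter.Eventually.of_forall hmax
  have h0 := hloc.hasFDerivAt_eq_zero (hasGradientAt_obj hJ w θhat).hasFDerivAt
  have h1 : gradient J θhat - lam • (θhat - w) = 0 := by
    have := congrArg (fun f => (InnerProductSpace.toDual ℝ _).symm f) h0
    simpa [gradient] using this
  rwa [sub_eq_zero] at h1

lemma ciSup_eq (w θhat : EuclideanSpace ℝ (Fin d))
    (hmax : ∀ θ, J θ - lam / 2 * ‖θ - w‖ ^ 2 ≤ J θhat - lam / 2 * ‖θhat - w‖ ^ 2) :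
    (⨆ θ : EuclideanSpace ℝ (Fin d), (J θ - lam / 2 * ‖θ - w‖ ^ 2))
      = J θhat - lam / 2 * ‖θhat - w‖ ^ 2 := by
  apply le_antisymm
  · exact ciSup_le hmax
  · refine le_ciSup (f := fun θ : EuclideanSpace ℝ (Fin d) => J θ - lam / 2 * ‖θ - w‖ ^ 2)
      ⟨J θhat - lam / 2 * ‖θhat - w‖ ^ 2, ?_⟩ θhat
    rintro x ⟨θ, rfl⟩
    exact hmax θ

end MoreauAux

/-- Inexact envelope gradient: if `‖∇J(θ̃) − λ(θ̃ − w)‖ ≤ ν`, then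
`‖λ(θ̃ − w) − ∇V(w)‖ ≤ λν/(λ − L̂)`. -/
theorem moreau_inexact_gradient_error
    (d : ℕ) (hd : 0 < d)
    (J : EuclideanSpace ℝ (Fin d) → ℝ) (Lhat lam ν : ℝ)
    (hLhat : 0 ≤ Lhat) (hJ : Differentiable ℝ J)
    (hLip : ∀ x y, ‖gradient J x - gradient J y‖ ≤ Lhat * ‖x - y‖)
    (hlam : Lhat < lam) (hν : 0 ≤ ν)
    (V : EuclideanSpace ℝ (Fin d) → ℝ)
    (hV : ∀ w, V w = ⨆ θ : EuclideanSpace ℝ (Fin d), (J θ - lam / 2 * ‖θ - w‖ ^ 2))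
    (w θtil : EuclideanSpace ℝ (Fin d))
    (hθtil : ‖gradient J θtil - lam • (θtil - w)‖ ≤ ν) :
    ‖lam • (θtil - w) - gradient V w‖ ≤ lam * ν / (lam - Lhat) := by
  have hlamL : (0:ℝ) < lam - Lhat := by linarith
  have hlam0 : (0:ℝ) < lam := lt_of_le_of_lt hLhat hlam
  -- the maximizer family
  choose Θ hΘ using fun w' => MoreauAux.exists_max hJ hLhat hLip hlam w'
  have hgrad : ∀ w', gradient J (Θ w') = lam • (Θ w' - w') :=
    fun w' => MoreauAux.grad_at_max hJ (hΘ w')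
  have hVval : ∀ w', V w' = J (Θ w') - lam / 2 * ‖Θ w' - w'‖ ^ 2 := by
    intro w'
    rw [hV w']
    exact MoreauAux.ciSup_eq w' (Θ w') (hΘ w')
  -- Lipschitz property of the maximizer
  obtain ⟨κ, hκ⟩ : ∃ κ : ℝ, κ = lam / (lam - Lhat) := ⟨_, rfl⟩
  have hκ0 : 0 < κ := by rw [hκ]; positivity
  have hLipΘ : ∀ w₁ w₂, ‖Θ w₁ - Θ w₂‖ ≤ κ * ‖w₁ - w₂‖ := by
    intro w₁ w₂
    have h := MoreauAux.strongmono hLip hlam (Θ w₁) (Θ w₂)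
    have he : lam • (Θ w₁ - Θ w₂) - (gradient J (Θ w₁) - gradient J (Θ w₂))
        = lam • (w₁ - w₂) := by
      rw [hgrad, hgrad]
      module
    rw [he, norm_smul, Real.norm_eq_abs, abs_of_pos hlam0] at h
    rw [hκ, div_mul_eq_mul_div, le_div_iff₀ hlamL]
    linarith [h]
  -- one-sided expansion inequality
  have hlow : ∀ w₁ w₂ : EuclideanSpace ℝ (Fin d),
      -(lam / 2) * ‖w₂ - w₁‖ ^ 2 ≤
        V w₂ - V w₁ - lam * ⟪Θ w₁ - w₁, w₂ - w₁⟫_ℝ := by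
    intro w₁ w₂
    have h1 : J (Θ w₁) - lam / 2 * ‖Θ w₁ - w₂‖ ^ 2 ≤ V w₂ := by
      rw [hVval w₂]; exact hΘ w₂ (Θ w₁)
    have h2 := hVval w₁
    have hid : ‖Θ w₁ - w₁‖ ^ 2 - ‖Θ w₁ - w₂‖ ^ 2
        = 2 * ⟪Θ w₁ - w₁, w₂ - w₁⟫_ℝ - ‖w₂ - w₁‖ ^ 2 := by
      have hveq : Θ w₁ - w₂ = (Θ w₁ - w₁) - (w₂ - w₁) := by abel
      rw [hveq, norm_sub_sq_real (Θ w₁ - w₁) (w₂ - w₁)]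
      ring
    have hid2 : lam / 2 * ‖Θ w₁ - w₁‖ ^ 2 - lam / 2 * ‖Θ w₁ - w₂‖ ^ 2
        = lam * ⟪Θ w₁ - w₁, w₂ - w₁⟫_ℝ - lam / 2 * ‖w₂ - w₁‖ ^ 2 := by
      linear_combination (lam / 2) * hid
    linarith [h1, hid2, h2.ge, h2.le]
  -- gradient of V at w
  obtain ⟨C, hC⟩ : ∃ C : ℝ, C = lam / 2 + lam * (κ + 1) := ⟨_, rfl⟩
  have hC0 : 0 < C := by rw [hC]; positivity
  have hbound : ∀ w' : EuclideanSpace ℝ (Fin d),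
      ‖V w' - V w - ⟪lam • (Θ w - w), w' - w⟫_ℝ‖ ≤ C * (‖w' - w‖ * ‖w' - w‖) := by
    intro w'
    have hsm : ⟪lam • (Θ w - w), w' - w⟫_ℝ = lam * ⟪Θ w - w, w' - w⟫_ℝ :=
      real_inner_smul_left _ _ _
    have hlo := hlow w w'
    have hhi := hlow w' w
    -- rewrite hhi
    have hrev : ‖w - w'‖ = ‖w' - w‖ := norm_sub_rev _ _
    rw [hrev] at hhi
    have hswap : ⟪Θ w' - w', w - w'⟫_ℝ = -⟪Θ w' - w', w' - w⟫_ℝ := by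
      rw [← inner_neg_right]; congr 1; abel
    rw [hswap] at hhi
    -- inner difference control
    have hdiff : ⟪Θ w' - w', w' - w⟫_ℝ - ⟪Θ w - w, w' - w⟫_ℝ
        = ⟪(Θ w' - Θ w) - (w' - w), w' - w⟫_ℝ := by
      rw [← inner_sub_left]; congr 1; abel
    have hnd : ‖(Θ w' - Θ w) - (w' - w)‖ ≤ (κ + 1) * ‖w' - w‖ := by
      have := norm_sub_le (Θ w' - Θ w) (w' - w)
      have := hLipΘ w' w
      have hrev2 : ‖w' - w‖ = ‖w - w'‖ := norm_sub_rev _ _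
      nlinarith [norm_nonneg (w' - w)]
    have hip : ⟪(Θ w' - Θ w) - (w' - w), w' - w⟫_ℝ ≤ (κ + 1) * ‖w' - w‖ * ‖w' - w‖ := by
      refine (real_inner_le_norm _ _).trans ?_
      nlinarith [norm_nonneg (w' - w), norm_nonneg ((Θ w' - Θ w) - (w' - w))]
    have huu : (0:ℝ) ≤ ‖w' - w‖ * ‖w' - w‖ := mul_nonneg (norm_nonneg _) (norm_nonneg _)
    have hCuu : C * (‖w' - w‖ * ‖w' - w‖)
        = lam / 2 * (‖w' - w‖ * ‖w' - w‖) + lam * (κ + 1) * (‖w' - w‖ * ‖w' - w‖) := by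
      rw [hC]; ring
    have hκuu : 0 ≤ lam * (κ + 1) * (‖w' - w‖ * ‖w' - w‖) := by positivity
    rw [pow_two] at hlo hhi
    rw [Real.norm_eq_abs, abs_le]
    constructor
    · rw [hsm]
      linarith [hlo]
    · rw [hsm]
      have h3 : V w' - V w ≤ lam * ⟪Θ w' - w', w' - w⟫_ℝ
          + lam / 2 * (‖w' - w‖ * ‖w' - w‖) := by
        linarith [hhi]
      have h4 : lam * ⟪Θ w' - w', w' - w⟫_ℝ - lam * ⟪Θ w - w, w' - w⟫_ℝ
          ≤ lam * ((κ + 1) * ‖w' - w‖ * ‖w' - w‖) := by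
        rw [← mul_sub, hdiff]
        exact mul_le_mul_of_nonneg_left hip hlam0.le
      have h5 : lam * ((κ + 1) * ‖w' - w‖ * ‖w' - w‖)
          = lam * (κ + 1) * (‖w' - w‖ * ‖w' - w‖) := by ring
      linarith [h3, h4]
  have hG : HasGradientAt V (lam • (Θ w - w)) w := by
    rw [hasGradientAt_iff_isLittleO]
    rw [Asymptotics.isLittleO_iff]
    intro c hc
    have hδ : (0:ℝ) < c / C := by positivity
    filter_upwards [Metric.ball_mem_nhds w hδ] with w' hw'
    rw [Metric.mem_ball, dist_eq_norm] at hw'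
    have h6 : ‖w' - w‖ * C < c := by rwa [lt_div_iff₀ hC0] at hw'
    have h7 : C * (‖w' - w‖ * ‖w' - w‖) ≤ c * ‖w' - w‖ := by
      nlinarith [norm_nonneg (w' - w)]
    exact (hbound w').trans h7
  have hgV : gradient V w = lam • (Θ w - w) := hG.gradient
  -- final estimate
  have hkey := MoreauAux.strongmono hLip hlam θtil (Θ w)
  have he2 : lam • (θtil - Θ w) - (gradient J θtil - gradient J (Θ w))
      = -(gradient J θtil - lam • (θtil - w)) := by
    rw [hgrad w]
    module
  rw [he2, norm_neg] at hkey
  have hdist : (lam - Lhat) * ‖θtil - Θ w‖ ≤ ν := le_trans hkey hθtil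
  have hfin : lam • (θtil - w) - gradient V w = lam • (θtil - Θ w) := by
    rw [hgV]
    module
  rw [hfin, norm_smul, Real.norm_eq_abs, abs_of_pos hlam0, le_div_iff₀ hlamL]
  nlinarith [mul_le_mul_of_nonneg_left hdist hlam0.le]
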